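/- Let a > b > c > 0 be reals, set s₁⁰ = arcsin(√((a−b)/(a−c))), s₂⁰ = arccos(√((a−b)/(a−c))), and for s₃ ∈ ℝ define r(s₁,s₂,s₃) = (x,y,z) ∈ ℝ³ by x = ((a−c)/√((a−b)(b−c)))·sin s₁·cos s₂·cos s₃, y = (1/√(b−c))·√(1 − ((a−c)/(a−b))·sin²s₁)·√(((a−c)/(a−b))·cos²s₂ − 1), z = ((a−c)/√((a−b)(b−c)))·cos s₁·sin s₂·sin s₃. Fix a sign ε ∈ {1,−1}. Then for all s₃, s₃' ∈ ℝ and all (s₁,s₂), (t₁,t₂) ∈ [−s₁⁰,s₁⁰] × [−s₂⁰,s₂⁰] with s₁ + ε·s₂ = t₁ + ε·t₂, one has ‖r(s₁,s₂,s₃) − r(t₁,t₂,s₃)‖ = ‖r(s₁,s₂,s₃') − r(t₁,t₂,s₃')‖. That is, as s₃ varies the circular cross-section curves s₁ + ε·s₂ = const are deformed isometrically (corresponding circles are congruent). -/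

import Mathlib

open Real

noncomputable def pt (x y z : ℝ) : EuclideanSpace ℝ (Fin 3) :=
  (WithLp.equiv 2 (Fin 3 → ℝ)).symm ![x, y, z]

lemma norm_pt_sub (x y z x' y' z' : ℝ) :
    ‖pt x y z - pt x' y' z'‖ = Real.sqrt ((x - x')^2 + (y - y')^2 + (z - z')^2) := by
  have h : pt x y z - pt x' y' z' = pt (x - x') (y - y') (z - z') := by
    simp only [pt, WithLp.equiv_symm_apply, ← WithLp.toLp_sub]
    congr 1
    ext i
    fin_cases i <;> simp
  rw [h, EuclideanSpace.norm_eq]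
  congr 1
  rw [Fin.sum_univ_three]
  simp [pt, sq_abs]

theorem circular_cross_sections_deformed_isometrically
    (a b c : ℝ) (hab : b < a) (hbc : c < b) (hc : 0 < c)
    (r : ℝ → ℝ → ℝ → EuclideanSpace ℝ (Fin 3))
    (hr : ∀ s₁ s₂ s₃ : ℝ, r s₁ s₂ s₃ =
      pt (((a - c) / Real.sqrt ((a - b) * (b - c)))
            * Real.sin s₁ * Real.cos s₂ * Real.cos s₃)
        ((1 / Real.sqrt (b - c))
            * Real.sqrt (1 - ((a - c) / (a - b)) * Real.sin s₁ ^ 2)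
            * Real.sqrt (((a - c) / (a - b)) * Real.cos s₂ ^ 2 - 1))
        (((a - c) / Real.sqrt ((a - b) * (b - c)))
            * Real.cos s₁ * Real.sin s₂ * Real.sin s₃))
    (ε : ℝ) (hε : ε = 1 ∨ ε = -1)
    (s₃ s₃' : ℝ) (s₁ s₂ t₁ t₂ : ℝ)
    (hs₁ : s₁ ∈ Set.Icc (-(Real.arcsin (Real.sqrt ((a - b) / (a - c)))))
        (Real.arcsin (Real.sqrt ((a - b) / (a - c)))))
    (hs₂ : s₂ ∈ Set.Icc (-(Real.arccos (Real.sqrt ((a - b) / (a - c)))))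
        (Real.arccos (Real.sqrt ((a - b) / (a - c)))))
    (ht₁ : t₁ ∈ Set.Icc (-(Real.arcsin (Real.sqrt ((a - b) / (a - c)))))
        (Real.arcsin (Real.sqrt ((a - b) / (a - c)))))
    (ht₂ : t₂ ∈ Set.Icc (-(Real.arccos (Real.sqrt ((a - b) / (a - c)))))
        (Real.arccos (Real.sqrt ((a - b) / (a - c)))))
    (hdiag : s₁ + ε * s₂ = t₁ + ε * t₂) :
    ‖r s₁ s₂ s₃ - r t₁ t₂ s₃‖ = ‖r s₁ s₂ s₃' - r t₁ t₂ s₃'‖ := by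
  simp only [hr, norm_pt_sub]
  set K := (a - c) / Real.sqrt ((a - b) * (b - c)) with hK
  -- A = -εB
  have hAB : Real.sin s₁ * Real.cos s₂ - Real.sin t₁ * Real.cos t₂
      = -ε * (Real.cos s₁ * Real.sin s₂ - Real.cos t₁ * Real.sin t₂) := by
    rcases hε with h | h
    · subst h
      have : s₁ + s₂ = t₁ + t₂ := by linarith
      have hs := Real.sin_add s₁ s₂
      have ht := Real.sin_add t₁ t₂
      rw [this, ht] at hs
      linarith
    · subst h
      have : s₁ - s₂ = t₁ - t₂ := by linarith
      have hs := Real.sin_sub s₁ s₂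
      have ht := Real.sin_sub t₁ t₂
      rw [this, ht] at hs
      linarith
  congr 1
  have h3 := Real.sin_sq_add_cos_sq s₃
  have h3' := Real.sin_sq_add_cos_sq s₃'
  have hε2 : ε ^ 2 = 1 := by rcases hε with h | h <;> simp [h]
  have hA2 : (Real.sin s₁ * Real.cos s₂ - Real.sin t₁ * Real.cos t₂) ^ 2
      = (Real.cos s₁ * Real.sin s₂ - Real.cos t₁ * Real.sin t₂) ^ 2 := by
    rw [hAB]
    linear_combination (Real.cos s₁ * Real.sin s₂ - Real.cos t₁ * Real.sin t₂) ^ 2 * hε2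
  linear_combination (K ^ 2 * (Real.cos s₃ ^ 2 - Real.cos s₃' ^ 2)) * hA2
    + (K ^ 2 * (Real.cos s₁ * Real.sin s₂ - Real.cos t₁ * Real.sin t₂) ^ 2) * h3
    - (K ^ 2 * (Real.cos s₁ * Real.sin s₂ - Real.cos t₁ * Real.sin t₂) ^ 2) * h3'
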